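/- Let f : EuclideanSpace ℝ (Fin n) → ℝ be twice continuously differentiable on an open set Ω, and let γ be a twice differentiable curve mapping an interval containing 0 into Ω such that f(γ(t)) is constant, with p = γ(0), ∇f(p) ≠ 0, ‖γ'(0)‖ = 1, and γ''(0) = κ · N(p) for some real number κ, where N(p) = ∇f(p)/‖∇f(p)‖. Then κ = −Q(p)(γ'(0), γ'(0)) / ‖∇f(p)‖, where Q(p) is the Hessian bilinear form of f at p. -/

import Mathlib

open Set

/-- The Hessian bilinear form of `f` at `p`, applied to `(v, w)`. -/
noncomputable def hessianForm {n : ℕ} (f : EuclideanSpace ℝ (Fin n) → ℝ)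
    (p v w : EuclideanSpace ℝ (Fin n)) : ℝ :=
  fderiv ℝ (fderiv ℝ f) p v w

/-- The unit normal `N(p) = ∇f(p)/‖∇f(p)‖`. -/
noncomputable def unitNormal {n : ℕ} (f : EuclideanSpace ℝ (Fin n) → ℝ)
    (p : EuclideanSpace ℝ (Fin n)) : EuclideanSpace ℝ (Fin n) :=
  ‖gradient f p‖⁻¹ • gradient f p

theorem signed_curvature_of_normal_section
    (n : ℕ) (f : EuclideanSpace ℝ (Fin n) → ℝ)
    (Ω : Set (EuclideanSpace ℝ (Fin n))) (hΩ : IsOpen Ω)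
    (hf : ContDiffOn ℝ 2 f Ω)
    (γ γ' γ'' : ℝ → EuclideanSpace ℝ (Fin n))
    (a b : ℝ) (hab : a < b) (h0 : (0 : ℝ) ∈ Icc a b)
    (hmap : ∀ t ∈ Icc a b, γ t ∈ Ω)
    (hγ' : ∀ t ∈ Icc a b, HasDerivAt γ (γ' t) t)
    (hγ'' : ∀ t ∈ Icc a b, HasDerivAt γ' (γ'' t) t)
    (c : ℝ) (hconst : ∀ t ∈ Icc a b, f (γ t) = c)
    (hgrad : gradient f (γ 0) ≠ 0)
    (hunit : ‖γ' 0‖ = 1)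
    (κ : ℝ) (hκ : γ'' 0 = κ • unitNormal f (γ 0)) :
    κ = -hessianForm f (γ 0) (γ' 0) (γ' 0) / ‖gradient f (γ 0)‖ := by
  set p := γ 0 with hp
  have hpΩ : p ∈ Ω := hmap 0 h0
  have hcd : ∀ t ∈ Icc a b, ContDiffAt ℝ 2 f (γ t) := fun t ht =>
    (hf (γ t) (hmap t ht)).contDiffAt (hΩ.mem_nhds (hmap t ht))
  have hfd : ∀ t ∈ Icc a b, DifferentiableAt ℝ f (γ t) := fun t ht =>
    (hcd t ht).differentiableAt two_ne_zero
  have hUD : UniqueDiffOn ℝ (Icc a b) := uniqueDiffOn_Icc hab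
  -- φ t = derivative of f ∘ γ at t; vanishes on Icc a b
  set φ : ℝ → ℝ := fun t => fderiv ℝ f (γ t) (γ' t) with hφ
  have hφ0 : ∀ t ∈ Icc a b, φ t = 0 := by
    intro t ht
    have h1 : HasDerivWithinAt (fun s => f (γ s)) (φ t) (Icc a b) t :=
      ((hfd t ht).hasFDerivAt.comp_hasDerivAt t (hγ' t ht)).hasDerivWithinAt
    have h2 : HasDerivWithinAt (fun s => f (γ s)) 0 (Icc a b) t :=
      (hasDerivWithinAt_const t (Icc a b) c).congr (fun y hy => hconst y hy) (hconst t ht)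
    rw [← h1.derivWithin (hUD t ht), h2.derivWithin (hUD t ht)]
  -- fderiv of fderiv f at p
  have h2p : ContDiffAt ℝ 1 (fderiv ℝ f) p := (hcd 0 h0).fderiv_right le_rfl
  have hA : HasFDerivAt (fderiv ℝ f) (fderiv ℝ (fderiv ℝ f) p) p :=
    ((h2p.differentiableAt one_ne_zero).hasFDerivAt)
  -- derivative of φ at 0
  have hφ' : HasDerivAt φ
      (fderiv ℝ (fderiv ℝ f) p (γ' 0) (γ' 0) + fderiv ℝ f p (γ'' 0)) 0 := by
    have hg1 : HasDerivAt (fun t => fderiv ℝ f (γ t)) (fderiv ℝ (fderiv ℝ f) p (γ' 0)) 0 :=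
      hA.comp_hasDerivAt 0 (hγ' 0 h0)
    exact hg1.clm_apply (hγ'' 0 h0)
  -- the derivative vanishes by uniqueness within Icc
  have hkey : fderiv ℝ (fderiv ℝ f) p (γ' 0) (γ' 0) + fderiv ℝ f p (γ'' 0) = 0 := by
    have h1 := hφ'.hasDerivWithinAt (s := Icc a b)
    have h2 : HasDerivWithinAt φ 0 (Icc a b) 0 :=
      (hasDerivWithinAt_const 0 (Icc a b) (0 : ℝ)).congr
        (fun y hy => hφ0 y hy) (hφ0 0 h0)
    rw [← h1.derivWithin (hUD 0 h0), h2.derivWithin (hUD 0 h0)]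
  -- compute fderiv f p (γ'' 0)
  have hfg : ∀ v, fderiv ℝ f p v = (inner ℝ (gradient f p) v : ℝ) := by
    intro v
    rw [← InnerProductSpace.toDual_apply_apply]
    simp [gradient]
  have hval : fderiv ℝ f p (γ'' 0) = κ * ‖gradient f p‖ := by
    rw [hfg, hκ, unitNormal, real_inner_smul_right, real_inner_smul_right,
      real_inner_self_eq_norm_sq]
    have hn : ‖gradient f p‖ ≠ 0 := norm_ne_zero_iff.mpr hgrad
    field_simp
  have hn : ‖gradient f p‖ ≠ 0 := norm_ne_zero_iff.mpr hgrad
  rw [hval] at hkey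
  rw [hessianForm]
  field_simp
  linarith [hkey]
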